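/- The function d ↦ χ_n(d) = (1/n) * Σ_{m | n} μ(m) * d^(n/m) is monotone increasing in d for each fixed positive integer n: if d ≤ d' then χ_n(d) ≤ χ_n(d'). -/

import Mathlib

def wittSum (n d : ℕ) : ℤ :=
  ∑ m ∈ n.divisors, (ArithmeticFunction.moebius m : ℤ) * (d : ℤ) ^ (n / m)

def witt (n d : ℕ) : ℤ := wittSum n d / n

lemma aux_pow_sub_mono {d d' : ℕ} (hd : 1 ≤ d) (hdd : d ≤ d') {a b : ℕ} (hab : a ≤ b) :
    (d' : ℤ) ^ a - (d : ℤ) ^ a ≤ (d' : ℤ) ^ b - (d : ℤ) ^ b := by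
  obtain ⟨c, rfl⟩ := Nat.exists_eq_add_of_le hab
  rw [pow_add, pow_add]
  have h1 : (1 : ℤ) ≤ (d : ℤ) := by exact_mod_cast hd
  have h2 : (d : ℤ) ≤ (d' : ℤ) := by exact_mod_cast hdd
  have hpa : (d : ℤ) ^ a ≤ (d' : ℤ) ^ a := pow_le_pow_left₀ (by linarith) h2 a
  have hpc : (d : ℤ) ^ c ≤ (d' : ℤ) ^ c := pow_le_pow_left₀ (by linarith) h2 c
  have h1a : (1 : ℤ) ≤ (d : ℤ) ^ a := one_le_pow₀ h1
  have h1c : (1 : ℤ) ≤ (d : ℤ) ^ c := one_le_pow₀ h1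
  nlinarith

theorem stmt_6 (n d d' : ℕ) (hn : 0 < n) (hd : 0 < d) (hd' : 0 < d') (h : d ≤ d') :
    witt n d ≤ witt n d' := by
  rcases eq_or_lt_of_le h with rfl | hlt
  · exact le_rfl
  have hd2 : 2 ≤ d' := by omega
  unfold witt
  apply Int.ediv_le_ediv (by exact_mod_cast hn)
  unfold wittSum
  rw [← sub_nonneg, ← Finset.sum_sub_distrib]
  have hrw : ∀ m ∈ n.divisors,
      (ArithmeticFunction.moebius m : ℤ) * (d' : ℤ) ^ (n / m)
        - (ArithmeticFunction.moebius m : ℤ) * (d : ℤ) ^ (n / m)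
      = (ArithmeticFunction.moebius m : ℤ) * ((d' : ℤ) ^ (n / m) - (d : ℤ) ^ (n / m)) := by
    intro m _; ring
  rw [Finset.sum_congr rfl hrw]
  have h1mem : 1 ∈ n.divisors := Nat.one_mem_divisors.mpr hn.ne'
  rw [← Finset.sum_erase_add _ _ h1mem]
  have hterm1 : (ArithmeticFunction.moebius 1 : ℤ) * ((d' : ℤ) ^ (n / 1) - (d : ℤ) ^ (n / 1))
      = (d' : ℤ) ^ n - (d : ℤ) ^ n := by
    simp [ArithmeticFunction.moebius_apply_one]
  rw [hterm1]
  -- T := d'^(n/2) - d^(n/2)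
  set T : ℤ := (d' : ℤ) ^ (n / 2) - (d : ℤ) ^ (n / 2) with hT
  have hT0 : 0 ≤ T := by
    have := pow_le_pow_left₀ (by positivity) (by exact_mod_cast h : (d:ℤ) ≤ d') (n / 2)
    simpa [hT] using this
  -- each remaining term is ≥ -T
  have hbound : ∀ m ∈ (n.divisors).erase 1,
      -T ≤ (ArithmeticFunction.moebius m : ℤ) * ((d' : ℤ) ^ (n / m) - (d : ℤ) ^ (n / m)) := by
    intro m hm
    have hm1 : m ≠ 1 := Finset.ne_of_mem_erase hm
    have hmd : m ∣ n := Nat.dvd_of_mem_divisors (Finset.mem_of_mem_erase hm)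
    have hm0 : 0 < m := Nat.pos_of_mem_divisors (Finset.mem_of_mem_erase hm)
    have hm2 : 2 ≤ m := by omega
    have hle : n / m ≤ n / 2 := Nat.div_le_div_left hm2 (by norm_num)
    have hDm0 : 0 ≤ (d' : ℤ) ^ (n / m) - (d : ℤ) ^ (n / m) := by
      have := pow_le_pow_left₀ (by positivity) (by exact_mod_cast h : (d:ℤ) ≤ d') (n / m)
      linarith
    have hDmT : (d' : ℤ) ^ (n / m) - (d : ℤ) ^ (n / m) ≤ T :=
      aux_pow_sub_mono hd h hle
    have hmu : -1 ≤ (ArithmeticFunction.moebius m : ℤ) := by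
      have := @ArithmeticFunction.abs_moebius_le_one m
      exact neg_le_of_abs_le this
    nlinarith
  have hsum : -((((n.divisors).erase 1).card : ℤ) * T)
      ≤ ∑ m ∈ (n.divisors).erase 1,
          (ArithmeticFunction.moebius m : ℤ) * ((d' : ℤ) ^ (n / m) - (d : ℤ) ^ (n / m)) := by
    have := Finset.card_nsmul_le_sum ((n.divisors).erase 1) _ (-T) hbound
    simpa [nsmul_eq_mul, mul_comm] using this
  -- card bound : card ≤ n/2
  have hcard : (((n.divisors).erase 1).card : ℤ) ≤ (n / 2 : ℕ) := by
    have hinj : Set.InjOn (fun m => n / m) ((n.divisors).erase 1 : Finset ℕ) := by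
      intro a ha b hb hab
      have had : a ∣ n := Nat.dvd_of_mem_divisors (Finset.mem_of_mem_erase ha)
      have hbd : b ∣ n := Nat.dvd_of_mem_divisors (Finset.mem_of_mem_erase hb)
      simp only at hab
      have : n / (n / a) = n / (n / b) := by rw [hab]
      rwa [Nat.div_div_self had hn.ne', Nat.div_div_self hbd hn.ne'] at this
    have hsub : ((n.divisors).erase 1).image (fun m => n / m) ⊆ Finset.Icc 1 (n / 2) := by
      intro x hx
      obtain ⟨m, hm, rfl⟩ := Finset.mem_image.mp hx
      have hm1 : m ≠ 1 := Finset.ne_of_mem_erase hm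
      have hmd : m ∣ n := Nat.dvd_of_mem_divisors (Finset.mem_of_mem_erase hm)
      have hm0 : 0 < m := Nat.pos_of_mem_divisors (Finset.mem_of_mem_erase hm)
      have hm2 : 2 ≤ m := by omega
      refine Finset.mem_Icc.mpr ⟨?_, Nat.div_le_div_left hm2 (by norm_num)⟩
      exact Nat.one_le_div_iff hm0 |>.mpr (Nat.le_of_dvd hn hmd)
    have h1 : ((n.divisors).erase 1).card
        = (((n.divisors).erase 1).image (fun m => n / m)).card :=
      (Finset.card_image_of_injOn hinj).symm
    have h2 := Finset.card_le_card hsub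
    have h3 : (Finset.Icc 1 (n / 2)).card = n / 2 := by simp
    exact_mod_cast h1 ▸ (h3 ▸ h2)
  -- (n/2) * T ≤ d'^n - d^n
  have hmain : ((n / 2 : ℕ) : ℤ) * T ≤ (d' : ℤ) ^ n - (d : ℤ) ^ n := by
    have hk : n / 2 + (n - n / 2) = n := by omega
    have hkk : n / 2 ≤ n - n / 2 := by omega
    have hnd : ((n / 2 : ℕ) : ℤ) ≤ (d' : ℤ) ^ (n - n / 2) := by
      have h2p : (n / 2 : ℕ) < 2 ^ (n / 2) := Nat.lt_two_pow_self
      have h2p2 : (2 : ℕ) ^ (n / 2) ≤ 2 ^ (n - n / 2) := Nat.pow_le_pow_right (by norm_num) hkk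
      have h2d : (2 : ℕ) ^ (n - n / 2) ≤ d' ^ (n - n / 2) := Nat.pow_le_pow_left hd2 _
      exact_mod_cast (h2p.le.trans (h2p2.trans h2d))
    have hsplit : (d' : ℤ) ^ n - (d : ℤ) ^ n
        = (d' : ℤ) ^ (n - n / 2) * (d' : ℤ) ^ (n / 2) - (d : ℤ) ^ (n - n / 2) * (d : ℤ) ^ (n / 2) := by
      rw [← pow_add, ← pow_add]
      congr 1 <;> congr 1 <;> omega
    rw [hsplit]
    have hdd' : (d : ℤ) ≤ (d' : ℤ) := by exact_mod_cast h
    have hp1 : (d : ℤ) ^ (n - n / 2) ≤ (d' : ℤ) ^ (n - n / 2) :=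
      pow_le_pow_left₀ (by positivity) hdd' _
    have hp2 : (0 : ℤ) ≤ (d : ℤ) ^ (n / 2) := by positivity
    nlinarith
  have : -((d' : ℤ) ^ n - (d : ℤ) ^ n)
      ≤ ∑ m ∈ (n.divisors).erase 1,
          (ArithmeticFunction.moebius m : ℤ) * ((d' : ℤ) ^ (n / m) - (d : ℤ) ^ (n / m)) := by
    have hcT : (((n.divisors).erase 1).card : ℤ) * T ≤ ((n / 2 : ℕ) : ℤ) * T :=
      mul_le_mul_of_nonneg_right hcard hT0
    linarith
  linarith
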